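/- Let s₁, s₂ be invertible 2×2 matrices over a commutative Poisson algebra with pointwise Sklyanin-type bracket {s₁⊗, s₂⊗}(v,w) = (1/(v−w))[Ω, s₁(v)⊗s₂(w)] (for v ≠ w). Then the determinant is Casimir: {det s₁(v), (s₂(w))_a^b} = 0 for all indices a, b and all v ≠ w. -/

import Mathlib

open Matrix

/-- Components of the Casimir element `Ω` of `𝔰𝔩₂`:
`Ω_a{}^b{}_c{}^d = δ_a^d δ_c^b − (1/2) δ_a^b δ_c^d`, with first pair `(a,c)` and second
pair `(b,d)`. -/
noncomputable def OmC : Fin 2 × Fin 2 → Fin 2 × Fin 2 → ℂ := fun p q =>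
  (if p.1 = q.2 ∧ p.2 = q.1 then 1 else 0) -
    (1 / 2) * (if p.1 = q.1 ∧ p.2 = q.2 then 1 else 0)

/-- For invertible `2×2` matrices `s(v)` over a commutative Poisson algebra whose
bracket is the Sklyanin-type bracket
`{s(v)_a{}^b, s(w)_c{}^d} = (1/(v−w)) [Ω, s(v)⊗s(w)]_a{}^b{}_c{}^d` (for `v ≠ w`),
the determinant is Casimir: `{det s(v), s(w)_c{}^d} = 0`. -/
theorem stmt_16 {R : Type*} [CommRing R] [Algebra ℂ R]
    (br : R → R → R)
    (br_antisymm : ∀ x y, br x y = -br y x)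
    (br_add : ∀ x y z, br (x + y) z = br x z + br y z)
    (br_leibniz : ∀ x y z, br (x * y) z = x * br y z + y * br x z)
    (s : ℂ → Matrix (Fin 2) (Fin 2) R)
    (hinv : ∀ v : ℂ, IsUnit ((s v).det))
    (hbr : ∀ v w : ℂ, v ≠ w → ∀ a b c d : Fin 2,
      br (s v a b) (s w c d) =
        (v - w)⁻¹ • (∑ e : Fin 2, ∑ f : Fin 2,
          (OmC (a, c) (e, f) • (s v e b * s w f d) -
            OmC (e, f) (b, d) • (s v a e * s w c f))))
    (v w : ℂ) (hvw : v ≠ w) (c d : Fin 2) :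
    br ((s v).det) (s w c d) = 0 := by
  have br0 : ∀ z, br 0 z = 0 := fun z => by
    have h := br_add 0 0 z
    rw [add_zero] at h
    exact right_eq_add.mp h
  have br_neg : ∀ y z, br (-y) z = -br y z := fun y z => by
    have h := br_add y (-y) z
    rw [add_neg_cancel, br0] at h
    exact eq_neg_of_add_eq_zero_right h.symm
  have br_sub : ∀ x y z, br (x - y) z = br x z - br y z := fun x y z => by
    rw [sub_eq_add_neg, br_add, br_neg, sub_eq_add_neg]
  rw [Matrix.det_fin_two, br_sub, br_leibniz, br_leibniz,
    hbr v w hvw 0 0 c d, hbr v w hvw 1 1 c d, hbr v w hvw 0 1 c d, hbr v w hvw 1 0 c d]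
  fin_cases c <;> fin_cases d <;>
    · norm_num [OmC, Fin.sum_univ_two, Algebra.smul_def, _root_.map_mul]
      ring
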